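/- Let Ω ⊆ ℝ be an open interval and let f, g : Ω → ℝ be continuously differentiable, strictly convex functions such that (i) f' and g' are differentiable and concave on Ω, (ii) g'(z) ≤ f'(z) for all z ∈ Ω, and (iii) g''(z) > 0 for all z ∈ Ω. Let x, m, y, n ∈ Ω satisfy x ≤ m and g'(y) − f'(x) = g'(n) − f'(m) = ξ for some fixed ξ ∈ ℝ. Then D(x, y) ≤ D(m, n), where D(u, v) = f(u) − g(v) − (u − v)·g'(v) is the skewed Bregman divergence. -/

import Mathlib

open Set Filter Topology

/-- Theorem 4.2 (monotonicity of the skewed Bregman divergence). -/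
theorem skewed_bregman_monotone
    (Ω : Set ℝ) (hΩopen : IsOpen Ω) (hΩconv : Convex ℝ Ω)
    (f g f' g' f'' g'' : ℝ → ℝ)
    (hf : ∀ z ∈ Ω, HasDerivAt f (f' z) z)
    (hg : ∀ z ∈ Ω, HasDerivAt g (g' z) z)
    (hf'cont : ContinuousOn f' Ω) (hg'cont : ContinuousOn g' Ω)
    (hfconv : StrictConvexOn ℝ Ω f) (hgconv : StrictConvexOn ℝ Ω g)
    (hf'deriv : ∀ z ∈ Ω, HasDerivAt f' (f'' z) z)
    (hg'deriv : ∀ z ∈ Ω, HasDerivAt g' (g'' z) z)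
    (hf'conc : ConcaveOn ℝ Ω f') (hg'conc : ConcaveOn ℝ Ω g')
    (hle : ∀ z ∈ Ω, g' z ≤ f' z)
    (hg''pos : ∀ z ∈ Ω, 0 < g'' z)
    (x m y n : ℝ) (hx : x ∈ Ω) (hm : m ∈ Ω) (hy : y ∈ Ω) (hn : n ∈ Ω)
    (hxm : x ≤ m) (ξ : ℝ)
    (hxy : g' y - f' x = ξ) (hmn : g' n - f' m = ξ) :
    f x - g y - (x - y) * g' y ≤ f m - g n - (m - n) * g' n := by
  -- strict monotonicity of the derivatives
  have hf'mono : StrictMonoOn f' Ω := fun u hu v hv huv =>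
    (hfconv.lt_slope_of_hasDerivAt hu hv huv (hf u hu)).trans
      (hfconv.slope_lt_of_hasDerivAt hu hv huv (hf v hv))
  have hg'mono : StrictMonoOn g' Ω := fun u hu v hv huv =>
    (hgconv.lt_slope_of_hasDerivAt hu hv huv (hg u hu)).trans
      (hgconv.slope_lt_of_hasDerivAt hu hv huv (hg v hv))
  -- tangent line bound for the concave function f'
  have htangent : ∀ u ∈ Ω, ∀ v ∈ Ω, f' v - f' u ≤ f'' u * (v - u) := by
    intro u hu v hv
    rcases lt_trichotomy u v with h | rfl | h
    · have hs := hf'conc.slope_le_of_hasDerivAt hu hv h (hf'deriv u hu)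
      rw [slope_def_field, div_le_iff₀ (sub_pos.2 h)] at hs
      linarith
    · simp
    · have hs := hf'conc.le_slope_of_hasDerivAt hv hu h (hf'deriv u hu)
      rw [slope_def_field, le_div_iff₀ (sub_pos.2 h)] at hs
      nlinarith
  rcases eq_or_lt_of_le hxm with rfl | hxm'
  · -- trivial case x = m
    have hgyn : g' y = g' n := by linarith
    have : y = n := hg'mono.injOn hy hn hgyn
    subst this
    exact le_rfl
  -- main case x < m
  have hIxm : Icc x m ⊆ Ω := hΩconv.ordConnected.out hx hm
  have hf'xm : f' x < f' m := hf'mono hx hm hxm'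
  have hab : g' y < g' n := by linarith
  have hyn : y < n := (hg'mono.lt_iff_lt hy hn).1 hab
  have hIyn : Icc y n ⊆ Ω := hΩconv.ordConnected.out hy hn
  -- inverse function of g' on [g' y, g' n]
  have hex : ∀ w ∈ Icc (g' y) (g' n), ∃ v, v ∈ Icc y n ∧ g' v = w := fun w hw =>
    intermediate_value_Icc hyn.le (hg'cont.mono hIyn) hw
  choose! V hVmem hVval using hex
  have hVΩ : ∀ w ∈ Icc (g' y) (g' n), V w ∈ Ω := fun w hw => hIyn (hVmem w hw)
  have hVuniq : ∀ v ∈ Ω, ∀ w ∈ Icc (g' y) (g' n), g' v = w → V w = v := fun v hv w hw hgv =>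
    hg'mono.injOn (hVΩ w hw) hv (by rw [hVval w hw, hgv])
  have hamem : g' y ∈ Icc (g' y) (g' n) := left_mem_Icc.2 hab.le
  have hbmem : g' n ∈ Icc (g' y) (g' n) := right_mem_Icc.2 hab.le
  have hVa : V (g' y) = y := hVuniq y hy (g' y) hamem rfl
  have hVb : V (g' n) = n := hVuniq n hn (g' n) hbmem rfl
  have hVmono : MonotoneOn V (Icc (g' y) (g' n)) := by
    intro w1 h1 w2 h2 h12
    by_contra hlt
    push_neg at hlt
    have := hg'mono (hVΩ w2 h2) (hVΩ w1 h1) hlt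
    rw [hVval w1 h1, hVval w2 h2] at this
    linarith
  -- V maps onto Icc y n
  have himg : Icc y n ⊆ V '' Icc (g' y) (g' n) := by
    intro v hv
    have hvΩ : v ∈ Ω := hIyn hv
    have hw : g' v ∈ Icc (g' y) (g' n) :=
      ⟨hg'mono.monotoneOn hy hvΩ hv.1, hg'mono.monotoneOn hvΩ hn hv.2⟩
    exact ⟨g' v, hw, hVuniq v hvΩ (g' v) hw rfl⟩
  -- strict bounds for V in the interior
  have hVlty : ∀ w ∈ Icc (g' y) (g' n), g' y < w → y < V w := by
    intro w hw h
    have : g' y < g' (V w) := by rw [hVval w hw]; exact h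
    exact (hg'mono.lt_iff_lt hy (hVΩ w hw)).1 this
  have hVltn : ∀ w ∈ Icc (g' y) (g' n), w < g' n → V w < n := by
    intro w hw h
    have : g' (V w) < g' n := by rw [hVval w hw]; exact h
    exact (hg'mono.lt_iff_lt (hVΩ w hw) hn).1 this
  -- continuity of V on Icc (g' y) (g' n)
  have hVright : ∀ w ∈ Ico (g' y) (g' n), ContinuousWithinAt V (Ici w) w := by
    intro w hw
    have hwIcc : w ∈ Icc (g' y) (g' n) := ⟨hw.1, hw.2.le⟩
    have hVwn : V w < n := hVltn w hwIcc hw.2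
    refine continuousWithinAt_right_of_monotoneOn_of_image_mem_nhdsWithin hVmono
      (Icc_mem_nhdsGE_of_mem hw) ?_
    refine mem_of_superset (Icc_mem_nhdsGE_of_mem ⟨le_rfl, hVwn⟩) ?_
    exact fun z hz => himg ⟨(hVmem w hwIcc).1.trans hz.1, hz.2⟩
  have hVleft : ∀ w ∈ Ioc (g' y) (g' n), ContinuousWithinAt V (Iic w) w := by
    intro w hw
    have hwIcc : w ∈ Icc (g' y) (g' n) := ⟨hw.1.le, hw.2⟩
    have hVwy : y < V w := hVlty w hwIcc hw.1
    refine continuousWithinAt_left_of_monotoneOn_of_image_mem_nhdsWithin hVmono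
      (Icc_mem_nhdsLE_of_mem hw) ?_
    refine mem_of_superset (Icc_mem_nhdsLE_of_mem ⟨hVwy, le_rfl⟩) ?_
    exact fun z hz => himg ⟨hz.1, hz.2.trans (hVmem w hwIcc).2⟩
  have hVcontOn : ContinuousOn V (Icc (g' y) (g' n)) := by
    intro w hw
    rcases eq_or_lt_of_le hw.1 with heq | haw
    · subst heq
      exact (hVright _ ⟨le_rfl, hab⟩).mono Icc_subset_Ici_self
    · rcases eq_or_lt_of_le hw.2 with heq2 | hwb
      · subst heq2
        exact (hVleft _ ⟨haw, le_rfl⟩).mono Icc_subset_Iic_self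
      · exact (continuousAt_iff_continuous_left_right.2
          ⟨hVleft w ⟨haw, hw.2⟩, hVright w ⟨hw.1, hwb⟩⟩).continuousWithinAt
  -- derivative of V in the interior
  have hVderiv : ∀ w ∈ Ioo (g' y) (g' n), HasDerivAt V (g'' (V w))⁻¹ w := by
    intro w hw
    have hwIcc : w ∈ Icc (g' y) (g' n) := Ioo_subset_Icc_self hw
    have hIccNhds : Icc (g' y) (g' n) ∈ 𝓝 w := Icc_mem_nhds hw.1 hw.2
    refine HasDerivAt.of_local_left_inverse ?_ (hg'deriv (V w) (hVΩ w hwIcc))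
      (ne_of_gt (hg''pos _ (hVΩ w hwIcc))) ?_
    · exact (hVcontOn w hwIcc).continuousAt hIccNhds
    · filter_upwards [hIccNhds] with z hz using hVval z hz
  -- the comparison-path function
  set F : ℝ → ℝ := fun t => f t - g (V (f' t + ξ)) - (t - V (f' t + ξ)) * (f' t + ξ) with hFdef
  have hφmaps : ∀ u ∈ Icc x m, f' u + ξ ∈ Icc (g' y) (g' n) := by
    intro u hu
    have h1 : f' x ≤ f' u := hf'mono.monotoneOn hx (hIxm hu) hu.1
    have h2 : f' u ≤ f' m := hf'mono.monotoneOn (hIxm hu) hm hu.2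
    constructor <;> [linarith; linarith]
  have hφmapsIoo : ∀ u ∈ Ioo x m, f' u + ξ ∈ Ioo (g' y) (g' n) := by
    intro u hu
    have h1 : f' x < f' u := hf'mono hx (hIxm (Ioo_subset_Icc_self hu)) hu.1
    have h2 : f' u < f' m := hf'mono (hIxm (Ioo_subset_Icc_self hu)) hm hu.2
    constructor <;> [linarith; linarith]
  -- derivative of F in the interior
  have hFderiv : ∀ u ∈ Ioo x m, HasDerivAt F (-ξ + (V (f' u + ξ) - u) * f'' u) u := by
    intro u hu
    have huΩ : u ∈ Ω := hIxm (Ioo_subset_Icc_self hu)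
    have hw : f' u + ξ ∈ Ioo (g' y) (g' n) := hφmapsIoo u hu
    have hwIcc : f' u + ξ ∈ Icc (g' y) (g' n) := Ioo_subset_Icc_self hw
    have hvΩ : V (f' u + ξ) ∈ Ω := hVΩ _ hwIcc
    have h1 : HasDerivAt (fun t : ℝ => f' t + ξ) (f'' u) u := (hf'deriv u huΩ).add_const ξ
    have h2 : HasDerivAt (fun t : ℝ => V (f' t + ξ)) ((g'' (V (f' u + ξ)))⁻¹ * f'' u) u := by
      simpa [Function.comp_def] using (hVderiv _ hw).comp u h1
    have h3 : HasDerivAt (fun t : ℝ => g (V (f' t + ξ)))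
        (g' (V (f' u + ξ)) * ((g'' (V (f' u + ξ)))⁻¹ * f'' u)) u := by
      simpa [Function.comp_def] using (hg _ hvΩ).comp u h2
    have h4 : HasDerivAt F
        (f' u - g' (V (f' u + ξ)) * ((g'' (V (f' u + ξ)))⁻¹ * f'' u) -
          ((1 - (g'' (V (f' u + ξ)))⁻¹ * f'' u) * (f' u + ξ) + (u - V (f' u + ξ)) * f'' u)) u := by
      rw [hFdef]
      exact ((hf u huΩ).sub h3).sub (((hasDerivAt_id' u).sub h2).mul h1)
    convert h4 using 1
    rw [hVval _ hwIcc]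
    ring
  -- nonnegativity of the derivative of F
  have hFnonneg : ∀ u ∈ Ioo x m, 0 ≤ -ξ + (V (f' u + ξ) - u) * f'' u := by
    intro u hu
    have huΩ : u ∈ Ω := hIxm (Ioo_subset_Icc_self hu)
    have hwIcc : f' u + ξ ∈ Icc (g' y) (g' n) := hφmaps u (Ioo_subset_Icc_self hu)
    have hvΩ : V (f' u + ξ) ∈ Ω := hVΩ _ hwIcc
    have h1 : g' (V (f' u + ξ)) = f' u + ξ := hVval _ hwIcc
    have h2 : g' (V (f' u + ξ)) ≤ f' (V (f' u + ξ)) := hle _ hvΩ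
    have h3 : f' (V (f' u + ξ)) - f' u ≤ f'' u * (V (f' u + ξ) - u) := htangent u huΩ _ hvΩ
    have h4 : (V (f' u + ξ) - u) * f'' u = f'' u * (V (f' u + ξ) - u) := mul_comm _ _
    linarith
  -- continuity of F on Icc x m
  have hVccont : ContinuousOn (fun t : ℝ => V (f' t + ξ)) (Icc x m) :=
    hVcontOn.comp ((hf'cont.mono hIxm).add continuousOn_const) hφmaps
  have hgcont : ContinuousOn g Ω := fun z hz => (hg z hz).continuousAt.continuousWithinAt
  have hfcont : ContinuousOn f Ω := fun z hz => (hf z hz).continuousAt.continuousWithinAt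
  have hFcont : ContinuousOn F (Icc x m) := by
    rw [hFdef]
    exact ((hfcont.mono hIxm).sub
        (hgcont.comp hVccont (fun t ht => hIyn (hVmem _ (hφmaps t ht))))).sub
      ((continuousOn_id.sub hVccont).mul ((hf'cont.mono hIxm).add continuousOn_const))
  -- F is monotone on Icc x m
  have hFmono : MonotoneOn F (Icc x m) := by
    apply monotoneOn_of_deriv_nonneg (convex_Icc x m) hFcont
    · rw [interior_Icc]
      exact fun u hu => (hFderiv u hu).differentiableAt.differentiableWithinAt
    · intro u hu
      rw [interior_Icc] at hu
      rw [(hFderiv u hu).deriv]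
      exact hFnonneg u hu
  have hkey : F x ≤ F m := hFmono (left_mem_Icc.2 hxm) (right_mem_Icc.2 hxm) hxm
  have hax : f' x + ξ = g' y := by linarith
  have hbm : f' m + ξ = g' n := by linarith
  have hFx : F x = f x - g y - (x - y) * g' y := by
    simp only [hFdef]
    rw [hax, hVa]
  have hFm : F m = f m - g n - (m - n) * g' n := by
    simp only [hFdef]
    rw [hbm, hVb]
  rw [← hFx, ← hFm]
  exact hkey
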